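/- Let H be a Hilbert space over ℝ or ℂ, and let A, B be bounded self-adjoint positive-definite operators on H (i.e., ⟨Ah,h⟩ > 0 and ⟨Bh,h⟩ > 0 for all h ≠ 0). Let T be a bounded self-adjoint operator on H such that Re⟨Th,h⟩ ≥ 2·√(Re⟨Ah,h⟩·Re⟨Bh,h⟩) for all h ∈ H. Then there exists τ > 0 such that Re⟨Th,h⟩ ≥ τ·Re⟨Ah,h⟩ + τ⁻¹·Re⟨Bh,h⟩ for all h ∈ H. -/

import Mathlib

open RCLike

/-! Auxiliary definitions and lemmas for `three_forms_operators`. -/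

noncomputable def tfAlpha (aa bb tt : ℝ) : ℝ := (tt - Real.sqrt (tt^2 - 4*aa*bb)) / (2*aa)
noncomputable def tfBeta (aa bb tt : ℝ) : ℝ := (tt + Real.sqrt (tt^2 - 4*aa*bb)) / (2*aa)

lemma tf_facts {aa bb tt : ℝ} (ha : 0 < aa) (hb : 0 < bb)
    (ht : 2 * Real.sqrt (aa*bb) ≤ tt) :
    0 < tfAlpha aa bb tt ∧ tfAlpha aa bb tt ≤ tfBeta aa bb tt ∧
    (∀ τ : ℝ, aa*τ^2 - tt*τ + bb = aa*(τ - tfAlpha aa bb tt)*(τ - tfBeta aa bb tt)) ∧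
    tfAlpha aa bb tt ≤ Real.sqrt (bb/aa) ∧ Real.sqrt (bb/aa) ≤ tfBeta aa bb tt := by
  have hab : 0 < aa*bb := mul_pos ha hb
  have hs : 0 < Real.sqrt (aa*bb) := Real.sqrt_pos.2 hab
  have htpos : 0 < tt := lt_of_lt_of_le (by positivity) ht
  have hsq : (Real.sqrt (aa*bb))^2 = aa*bb := Real.sq_sqrt hab.le
  have hdisc : 4*aa*bb ≤ tt^2 := by nlinarith
  set d := Real.sqrt (tt^2 - 4*aa*bb) with hdd
  have hd2 : d^2 = tt^2 - 4*aa*bb := Real.sq_sqrt (by linarith)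
  have hd0 : 0 ≤ d := Real.sqrt_nonneg _
  have hdlt : d < tt := by nlinarith
  have hal : tfAlpha aa bb tt = (tt - d)/(2*aa) := rfl
  have hbe : tfBeta aa bb tt = (tt + d)/(2*aa) := rfl
  have h2a : (0:ℝ) < 2*aa := by positivity
  have hfac : ∀ τ : ℝ, aa*τ^2 - tt*τ + bb = aa*(τ - tfAlpha aa bb tt)*(τ - tfBeta aa bb tt) := by
    intro τ
    rw [hal, hbe]
    field_simp
    nlinarith [hd2, sq_nonneg τ]
  have halpos : 0 < tfAlpha aa bb tt := by rw [hal]; exact div_pos (by linarith) h2a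
  have hab' : tfAlpha aa bb tt ≤ tfBeta aa bb tt := by
    rw [hal, hbe]; exact (div_le_div_iff_of_pos_right h2a).mpr (by linarith)
  set τ0 := Real.sqrt (bb/aa) with ht0
  have ht00 : 0 ≤ τ0 := Real.sqrt_nonneg _
  have ht02 : τ0^2 = bb/aa := Real.sq_sqrt (by positivity)
  have hmul : Real.sqrt (aa*bb) * τ0 = bb := by
    rw [ht0, ← Real.sqrt_mul hab.le]
    rw [show aa*bb*(bb/aa) = bb^2 by field_simp]
    exact Real.sqrt_sq hb.le
  have hval : aa*τ0^2 - tt*τ0 + bb ≤ 0 := by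
    have h1 : 2 * Real.sqrt (aa*bb) * τ0 ≤ tt * τ0 :=
      mul_le_mul_of_nonneg_right ht ht00
    have h2 : aa * τ0^2 = bb := by rw [ht02]; field_simp
    nlinarith
  have hfc := hfac τ0
  refine ⟨halpos, hab', hfac, ?_, ?_⟩
  · by_contra hcon
    push_neg at hcon
    nlinarith [mul_pos ha (mul_pos (sub_pos.2 hcon)
      (sub_pos.2 (lt_of_lt_of_le hcon hab')))]
  · by_contra hcon
    push_neg at hcon
    nlinarith [mul_pos ha (mul_pos (sub_pos.2 (lt_of_le_of_lt hab' hcon))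
      (sub_pos.2 hcon))]

lemma tf_quad_contra {qh qk qb u1 u2 : ℝ}
    (h1 : qh + 2*u1*qb + u1^2*qk ≤ 0) (h2 : qh + 2*u2*qb + u2^2*qk ≤ 0)
    (hqh : 0 < qh) (hqk : 0 < qk) (huu : u1*u2 < 0) : False := by
  rcases lt_trichotomy u1 0 with hu1 | hu1 | hu1
  · have hu2 : 0 < u2 := by nlinarith
    have a1 : u2 * (qh + 2*u1*qb + u1^2*qk) ≤ 0 :=
      mul_nonpos_of_nonneg_of_nonpos hu2.le h1
    have a2 : (-u1) * (qh + 2*u2*qb + u2^2*qk) ≤ 0 :=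
      mul_nonpos_of_nonneg_of_nonpos (by linarith) h2
    nlinarith [mul_pos (mul_pos (neg_pos.2 (by nlinarith : u1*u2 < 0)) hqk)
      (sub_pos.2 (lt_trans hu1 hu2))]
  · rw [hu1] at huu; simp at huu
  · have hu2 : u2 < 0 := by nlinarith
    have a1 : (-u2) * (qh + 2*u1*qb + u1^2*qk) ≤ 0 :=
      mul_nonpos_of_nonneg_of_nonpos (by linarith) h1
    have a2 : u1 * (qh + 2*u2*qb + u2^2*qk) ≤ 0 :=
      mul_nonpos_of_nonneg_of_nonpos hu1.le h2
    nlinarith [mul_pos (mul_pos (neg_pos.2 huu) hqk) (sub_pos.2 (lt_trans hu2 hu1))]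

section Aux
variable {𝕜 : Type*} [RCLike 𝕜] {H : Type*} [NormedAddCommGroup H]
    [InnerProductSpace 𝕜 H] [CompleteSpace H]

lemma three_forms_symm_aux (F : H →L[𝕜] H) (hF : IsSelfAdjoint F) (x y : H) :
    re (inner 𝕜 (F y) x : 𝕜) = re (inner 𝕜 (F x) y : 𝕜) := by
  have h1 : (inner 𝕜 (F y) x : 𝕜) = inner 𝕜 y (F x) := hF.isSymmetric y x
  rw [h1, ← inner_conj_symm (F x) y, conj_re]

lemma three_forms_expand_aux (F : H →L[𝕜] H) (hF : IsSelfAdjoint F) (x y : H) (u : ℝ) :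
    re (inner 𝕜 (F (x + (u:𝕜) • y)) (x + (u:𝕜) • y) : 𝕜)
      = re (inner 𝕜 (F x) x : 𝕜) + 2*u* re (inner 𝕜 (F x) y : 𝕜)
        + u^2 * re (inner 𝕜 (F y) y : 𝕜) := by
  have hsym := three_forms_symm_aux F hF x y
  simp only [map_add, map_smul, inner_add_left, inner_add_right, inner_smul_left,
    inner_smul_right, RCLike.conj_ofReal, mul_add, RCLike.re_ofReal_mul, map_add]
  rw [hsym]; ring

/-- The key geometric step: the `q_c` quadratic form is `≤ 0` at any point of the
null cone of the form `b - c²·a`. -/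
lemma three_forms_key2 (A B T : H →L[𝕜] H)
    (hA : IsSelfAdjoint A) (hB : IsSelfAdjoint B) (hT : IsSelfAdjoint T)
    (hApos : ∀ h : H, h ≠ 0 → 0 < re (inner 𝕜 (A h) h : 𝕜))
    (hineq : ∀ h : H,
      2 * Real.sqrt (re (inner 𝕜 (A h) h : 𝕜) * re (inner 𝕜 (B h) h : 𝕜))
        ≤ re (inner 𝕜 (T h) h : 𝕜))
    (h k : H) (c u : ℝ) (hc0 : 0 < c)
    (hu : (re (inner 𝕜 (B k) k : 𝕜) - c^2 * re (inner 𝕜 (A k) k : 𝕜)) * u^2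
        + 2 * (re (inner 𝕜 (B h) k : 𝕜) - c^2 * re (inner 𝕜 (A h) k : 𝕜)) * u
        + (re (inner 𝕜 (B h) h : 𝕜) - c^2 * re (inner 𝕜 (A h) h : 𝕜)) = 0) :
    (c * re (inner 𝕜 (A h) h : 𝕜) + c⁻¹ * re (inner 𝕜 (B h) h : 𝕜) - re (inner 𝕜 (T h) h : 𝕜))
      + 2*u*(c * re (inner 𝕜 (A h) k : 𝕜) + c⁻¹ * re (inner 𝕜 (B h) k : 𝕜) - re (inner 𝕜 (T h) k : 𝕜))
      + u^2*(c * re (inner 𝕜 (A k) k : 𝕜) + c⁻¹ * re (inner 𝕜 (B k) k : 𝕜) - re (inner 𝕜 (T k) k : 𝕜))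
      ≤ 0 := by
  have eA := three_forms_expand_aux A hA h k u
  have eB := three_forms_expand_aux B hB h k u
  have eT := three_forms_expand_aux T hT h k u
  set z := h + (u:𝕜) • k with dz
  set az := re (inner 𝕜 (A z) z : 𝕜) with daz
  set bz := re (inner 𝕜 (B z) z : 𝕜) with dbz
  set tz := re (inner 𝕜 (T z) z : 𝕜) with dtz
  have haz0 : 0 ≤ az := by
    by_cases hz : z = 0
    · rw [daz, hz]; simp
    · exact (hApos z hz).le
  have hbz2 : bz = c^2 * az := by
    rw [eA, eB]; linear_combination hu
  have htz2 : 2 * Real.sqrt (az * bz) ≤ tz := hineq z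
  have hsqz : Real.sqrt (az * bz) = c * az := by
    rw [hbz2, show az*(c^2*az) = (c*az)^2 by ring]
    exact Real.sqrt_sq (mul_nonneg hc0.le haz0)
  rw [hsqz] at htz2
  have hgoal : (c * re (inner 𝕜 (A h) h : 𝕜) + c⁻¹ * re (inner 𝕜 (B h) h : 𝕜) - re (inner 𝕜 (T h) h : 𝕜))
      + 2*u*(c * re (inner 𝕜 (A h) k : 𝕜) + c⁻¹ * re (inner 𝕜 (B h) k : 𝕜) - re (inner 𝕜 (T h) k : 𝕜))
      + u^2*(c * re (inner 𝕜 (A k) k : 𝕜) + c⁻¹ * re (inner 𝕜 (B k) k : 𝕜) - re (inner 𝕜 (T k) k : 𝕜))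
      = c*az + c⁻¹*bz - tz := by
    rw [eA, eB, eT]; ring
  rw [hgoal, hbz2]
  have hinv : c⁻¹*(c^2*az) = c*az := by
    field_simp
  rw [hinv]
  linarith only [htz2]

end Aux

set_option maxHeartbeats 1000000 in
/-- Theorem (operator form): if `A, B` are bounded self-adjoint positive-definite
operators on a Hilbert space `H` over `ℝ` or `ℂ`, and `T` is a bounded self-adjoint
operator with `Re⟨Th,h⟩ ≥ 2√(Re⟨Ah,h⟩·Re⟨Bh,h⟩)` for all `h`, then there is `τ > 0`
with `Re⟨Th,h⟩ ≥ τ·Re⟨Ah,h⟩ + τ⁻¹·Re⟨Bh,h⟩` for all `h`. -/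
theorem three_forms_operators
    {𝕜 : Type*} [RCLike 𝕜] {H : Type*} [NormedAddCommGroup H]
    [InnerProductSpace 𝕜 H] [CompleteSpace H]
    (A B T : H →L[𝕜] H)
    (hA : IsSelfAdjoint A) (hB : IsSelfAdjoint B) (hT : IsSelfAdjoint T)
    (hApos : ∀ h : H, h ≠ 0 → 0 < re (inner 𝕜 (A h) h : 𝕜))
    (hBpos : ∀ h : H, h ≠ 0 → 0 < re (inner 𝕜 (B h) h : 𝕜))
    (hineq : ∀ h : H,
      2 * Real.sqrt (re (inner 𝕜 (A h) h : 𝕜) * re (inner 𝕜 (B h) h : 𝕜))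
        ≤ re (inner 𝕜 (T h) h : 𝕜)) :
    ∃ τ : ℝ, 0 < τ ∧ ∀ h : H,
      τ * re (inner 𝕜 (A h) h : 𝕜) + τ⁻¹ * re (inner 𝕜 (B h) h : 𝕜)
        ≤ re (inner 𝕜 (T h) h : 𝕜) := by
  classical
  by_cases hne : ∃ h0 : H, h0 ≠ 0
  swap
  · push_neg at hne
    refine ⟨1, one_pos, fun h => ?_⟩
    simp [hne h]
  obtain ⟨h0, hh0⟩ := hne
  set αf : H → ℝ := fun x =>
    tfAlpha (re (inner 𝕜 (A x) x : 𝕜)) (re (inner 𝕜 (B x) x : 𝕜)) (re (inner 𝕜 (T x) x : 𝕜)) with hαf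
  set βf : H → ℝ := fun x =>
    tfBeta (re (inner 𝕜 (A x) x : 𝕜)) (re (inner 𝕜 (B x) x : 𝕜)) (re (inner 𝕜 (T x) x : 𝕜)) with hβf
  have key : ∀ x : H, x ≠ 0 →
      0 < αf x ∧ αf x ≤ βf x ∧
      (∀ τ : ℝ, re (inner 𝕜 (A x) x : 𝕜) * τ^2 - re (inner 𝕜 (T x) x : 𝕜) * τ
          + re (inner 𝕜 (B x) x : 𝕜)
        = re (inner 𝕜 (A x) x : 𝕜) * (τ - αf x) * (τ - βf x)) ∧
      αf x ≤ Real.sqrt (re (inner 𝕜 (B x) x : 𝕜) / re (inner 𝕜 (A x) x : 𝕜)) ∧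
      Real.sqrt (re (inner 𝕜 (B x) x : 𝕜) / re (inner 𝕜 (A x) x : 𝕜)) ≤ βf x :=
    fun x hx => tf_facts (hApos x hx) (hBpos x hx) (hineq x)
  -- pairwise intersection of the intervals [αf x, βf x]
  have hpair : ∀ h k : H, h ≠ 0 → k ≠ 0 → αf h ≤ βf k := by
    intro h k hh hk
    by_contra hcon
    push_neg at hcon  -- βf k < αf h
    obtain ⟨hαh, hαβh, hfach, hατh, hτβh⟩ := key h hh
    obtain ⟨hαk, hαβk, hfack, hατk, hτβk⟩ := key k hk
    set ah := re (inner 𝕜 (A h) h : 𝕜) with dah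
    set bh := re (inner 𝕜 (B h) h : 𝕜) with dbh
    set th := re (inner 𝕜 (T h) h : 𝕜) with dth
    set ak := re (inner 𝕜 (A k) k : 𝕜) with dak
    set bk := re (inner 𝕜 (B k) k : 𝕜) with dbk
    set tk := re (inner 𝕜 (T k) k : 𝕜) with dtk
    set abk := re (inner 𝕜 (A h) k : 𝕜) with dabk
    set bbk := re (inner 𝕜 (B h) k : 𝕜) with dbbk
    set tbk := re (inner 𝕜 (T h) k : 𝕜) with dtbk
    have hah : 0 < ah := hApos h hh
    have hbh : 0 < bh := hBpos h hh
    have hak : 0 < ak := hApos k hk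
    have hbk : 0 < bk := hBpos k hk
    set c := (βf k + αf h)/2 with hc
    have hck : βf k < c := by rw [hc]; linarith
    have hch : c < αf h := by rw [hc]; linarith
    have hc0 : 0 < c := lt_trans (lt_of_lt_of_le hαk hαβk) hck
    -- q-values at h and k are positive
    have hqh : 0 < c*ah + c⁻¹*bh - th := by
      have h1 : 0 < ah*c^2 - th*c + bh := by
        rw [hfach c]
        nlinarith only [mul_pos hah (mul_pos (sub_pos.2 hch)
          (sub_pos.2 (lt_of_lt_of_le hch hαβh)))]
      have h2 : c*(c*ah + c⁻¹*bh - th) = ah*c^2 - th*c + bh := by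
        field_simp; ring
      nlinarith only [h1, h2, hc0]
    have hqk : 0 < c*ak + c⁻¹*bk - tk := by
      have h1 : 0 < ak*c^2 - tk*c + bk := by
        rw [hfack c]
        nlinarith only [mul_pos hak (mul_pos (sub_pos.2 (lt_of_le_of_lt hαβk hck))
          (sub_pos.2 hck))]
      have h2 : c*(c*ak + c⁻¹*bk - tk) = ak*c^2 - tk*c + bk := by
        field_simp; ring
      nlinarith only [h1, h2, hc0]
    -- p-values: bh - c²ah > 0 > bk - c²ak
    have hsh : (Real.sqrt (bh/ah))^2 = bh/ah :=
      Real.sq_sqrt (div_nonneg hbh.le hah.le)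
    have hsk : (Real.sqrt (bk/ak))^2 = bk/ak :=
      Real.sq_sqrt (div_nonneg hbk.le hak.le)
    have hph : 0 < bh - c^2*ah := by
      have h1 : c < Real.sqrt (bh/ah) := lt_of_lt_of_le hch hατh
      have h2 : c^2 < bh/ah := by nlinarith only [h1, hsh, hc0]
      have h3 : c^2 * ah < bh := (lt_div_iff₀ hah).1 h2
      linarith only [h3]
    have hpk : bk - c^2*ak < 0 := by
      have h1 : Real.sqrt (bk/ak) < c := lt_of_le_of_lt hτβk hck
      have h2 : bk/ak < c^2 := by
        nlinarith only [h1, hsk, Real.sqrt_nonneg (bk/ak)]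
      have h3 : bk < c^2 * ak := (div_lt_iff₀ hak).1 h2
      linarith only [h3]
    set ph := bh - c^2*ah with dph
    set pk := bk - c^2*ak with dpk
    set pb := bbk - c^2*abk with dpb
    have hpk0 : pk ≠ 0 := ne_of_lt hpk
    have hD : 0 < pb^2 - ph*pk := by
      nlinarith only [sq_nonneg pb, mul_pos hph (neg_pos.2 hpk)]
    set sD := Real.sqrt (pb^2 - ph*pk) with dsD
    have hsD2 : sD^2 = pb^2 - ph*pk := Real.sq_sqrt hD.le
    set u1 := (-pb + sD)/pk with du1
    set u2 := (-pb - sD)/pk with du2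
    have e1 : u1 * pk = -pb + sD := by
      rw [du1]; field_simp
    have e2 : u2 * pk = -pb - sD := by
      rw [du2]; field_simp
    have hroot1 : pk*u1^2 + 2*pb*u1 + ph = 0 := by
      apply mul_left_cancel₀ hpk0
      rw [mul_zero]
      linear_combination (u1*pk + sD + pb)*e1 + hsD2
    have hroot2 : pk*u2^2 + 2*pb*u2 + ph = 0 := by
      apply mul_left_cancel₀ hpk0
      rw [mul_zero]
      linear_combination (u2*pk - sD + pb)*e2 + hsD2
    have huu : u1*u2 < 0 := by
      have h12 : pk*(u1*u2*pk) = ph*pk := by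
        linear_combination (u2*pk)*e1 + (-pb+sD)*e2 - hsD2
      nlinarith only [h12, mul_neg_of_pos_of_neg hph hpk, sq_nonneg pk]
    have key1 : (c*ah + c⁻¹*bh - th) + 2*u1*(c*abk + c⁻¹*bbk - tbk)
        + u1^2*(c*ak + c⁻¹*bk - tk) ≤ 0 := by
      have hr := hroot1
      rw [dpk, dpb, dph, dak, dbk, dabk, dbbk, dah, dbh] at hr
      have h9 := three_forms_key2 A B T hA hB hT hApos hineq h k c u1 hc0 hr
      rw [← dah, ← dbh, ← dth, ← dak, ← dbk, ← dtk, ← dabk, ← dbbk, ← dtbk] at h9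
      exact h9
    have key2 : (c*ah + c⁻¹*bh - th) + 2*u2*(c*abk + c⁻¹*bbk - tbk)
        + u2^2*(c*ak + c⁻¹*bk - tk) ≤ 0 := by
      have hr := hroot2
      rw [dpk, dpb, dph, dak, dbk, dabk, dbbk, dah, dbh] at hr
      have h9 := three_forms_key2 A B T hA hB hT hApos hineq h k c u2 hc0 hr
      rw [← dah, ← dbh, ← dth, ← dak, ← dbk, ← dtk, ← dabk, ← dbbk, ← dtbk] at h9
      exact h9
    exact tf_quad_contra key1 key2 hqh hqk huu
  -- take τ to be the sup of the αf over nonzero vectors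
  set S : Set ℝ := {x | ∃ k : H, k ≠ 0 ∧ x = αf k} with hS
  have hSne : S.Nonempty := ⟨αf h0, h0, hh0, rfl⟩
  have hSbdd : BddAbove S := by
    refine ⟨βf h0, ?_⟩
    rintro x ⟨k, hk, rfl⟩
    exact hpair k h0 hk hh0
  set τ := sSup S with hτ
  have hτ0 : 0 < τ := by
    have h1 : αf h0 ≤ τ := le_csSup hSbdd ⟨h0, hh0, rfl⟩
    have h2 := (key h0 hh0).1
    linarith only [h1, h2]
  refine ⟨τ, hτ0, fun h => ?_⟩
  by_cases hx : h = 0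
  · simp [hx]
  · obtain ⟨hα, hαβ, hfac, -, -⟩ := key h hx
    have h1 : αf h ≤ τ := le_csSup hSbdd ⟨h, hx, rfl⟩
    have h2 : τ ≤ βf h := by
      apply csSup_le hSne
      rintro x ⟨k, hk, rfl⟩
      exact hpair k h hk hx
    have h3 : re (inner 𝕜 (A h) h : 𝕜) * τ^2 - re (inner 𝕜 (T h) h : 𝕜) * τ
        + re (inner 𝕜 (B h) h : 𝕜) ≤ 0 := by
      rw [hfac τ]
      nlinarith only [mul_nonneg (sub_nonneg.2 h1) (sub_nonneg.2 h2), hApos h hx]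
    have h4 : τ * (τ * re (inner 𝕜 (A h) h : 𝕜) + τ⁻¹ * re (inner 𝕜 (B h) h : 𝕜)
        - re (inner 𝕜 (T h) h : 𝕜))
        = re (inner 𝕜 (A h) h : 𝕜) * τ^2 - re (inner 𝕜 (T h) h : 𝕜) * τ
          + re (inner 𝕜 (B h) h : 𝕜) := by
      field_simp; ring
    nlinarith only [h3, h4, hτ0]
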